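/- Let H_0, ..., H_{K-1} be symmetric d×d matrices with h·I ⪯ H_k ⪯ H·I for k = K-M,...,K-1 and ‖H_k‖ ≤ H for k < K-M, where 0 < α ≤ 1/H, 0 < h ≤ H, and M ≤ min{L, K−L}. Then the binomial estimate Ĝ = [I + Σ_{l=1}^{L} Σ_{0≤k_1<...<k_l<K} ∏_{i=1}^{l}(-α H_{k_i})] g satisfies ‖∏_{k=0}^{K-1}(I - α H_k) g − Ĝ‖ ≤ [(αH)^{L+1} Σ_{l=1}^{M} C(K-l, L)(1-αh)^{l-1} + (1-αh)^M Σ_{l=L+1}^{K-M} C(K-M, l)(αH)^l] ‖g‖. -/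

import Mathlib

open Matrix Finset
open scoped Matrix.Norms.L2Operator

variable {d : ℕ}

/-- Operator (spectral) norm of a real `d × d` matrix, acting on Euclidean space. -/
noncomputable def matOpNorm (M : Matrix (Fin d) (Fin d) ℝ) : ℝ :=
  ‖Matrix.toEuclideanCLM (𝕜 := ℝ) M‖

/-- Apply a matrix to a vector of Euclidean space. -/
noncomputable def applyM (M : Matrix (Fin d) (Fin d) ℝ) (g : EuclideanSpace ℝ (Fin d)) :
    EuclideanSpace ℝ (Fin d) :=
  Matrix.toEuclideanCLM (𝕜 := ℝ) M g

/-- Ordered product `∏_{k=a}^{a+n-1} (I - α H k)`, factors ordered by increasing `k`. -/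
def mulList (H : ℕ → Matrix (Fin d) (Fin d) ℝ) (α : ℝ) (a n : ℕ) :
    Matrix (Fin d) (Fin d) ℝ :=
  ((List.range' a n).map (fun k => (1 : Matrix (Fin d) (Fin d) ℝ) - α • H k)).prod

/-- Truncated binomial expansion
`I + Σ_{l=1}^{L} Σ_{0 ≤ k₁ < … < k_l < K} ∏_{i=1}^{l} (-α H_{k_i})`,
with each inner product ordered by increasing index. -/
def binomSum (H : ℕ → Matrix (Fin d) (Fin d) ℝ) (α : ℝ) (K L : ℕ) :
    Matrix (Fin d) (Fin d) ℝ :=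
  1 + ∑ l ∈ Finset.Icc 1 L, ∑ s ∈ (Finset.range K).powersetCard l,
      ((s.sort (· ≤ ·)).map (fun k => -(α • H k))).prod

lemma matOpNorm_eq (M : Matrix (Fin d) (Fin d) ℝ) : matOpNorm M = ‖M‖ := rfl

lemma norm_one_le' : ‖(1 : Matrix (Fin d) (Fin d) ℝ)‖ ≤ 1 := by
  rw [Matrix.cstar_norm_def, _root_.map_one]
  exact ContinuousLinearMap.norm_id_le

lemma applyM_le (M : Matrix (Fin d) (Fin d) ℝ) (g : EuclideanSpace ℝ (Fin d)) :
    ‖applyM M g‖ ≤ ‖M‖ * ‖g‖ :=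
  (Matrix.toEuclideanCLM (𝕜 := ℝ) M).le_opNorm g

lemma inner_eq_dot (u v : EuclideanSpace ℝ (Fin d)) :
    (inner ℝ u v : ℝ) = (WithLp.equiv 2 _ u) ⬝ᵥ (WithLp.equiv 2 _ v) := by
  simp [PiLp.inner_apply, dotProduct, RCLike.inner_apply, mul_comm]

lemma psd_smul {A : Matrix (Fin d) (Fin d) ℝ} {c : ℝ} (hc : 0 ≤ c) (hA : A.PosSemidef) :
    (c • A).PosSemidef := by
  rw [Matrix.posSemidef_iff_dotProduct_mulVec]
  constructor
  · show (c • A)ᴴ = c • A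
    rw [Matrix.conjTranspose_smul, star_trivial, hA.1]
  · intro x
    have := hA.dotProduct_mulVec_nonneg x
    simp only [Matrix.smul_mulVec, dotProduct_smul, smul_eq_mul] at *
    positivity

lemma psd_sub_sq {A : Matrix (Fin d) (Fin d) ℝ} {c : ℝ}
    (hA : A.PosSemidef) (hcA : (c • (1 : Matrix (Fin d) (Fin d) ℝ) - A).PosSemidef) :
    (c • A - A * A).PosSemidef := by
  classical
  obtain ⟨S, hB, h1⟩ : ∃ S : Matrix (Fin d) (Fin d) ℝ, S.PosSemidef ∧ S * S = A := by
    open scoped MatrixOrder in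
    exact ⟨CFC.sqrt A, (CFC.sqrt_nonneg A).posSemidef, CFC.sqrt_mul_sqrt_self A hA.nonneg⟩
  have h2 := hcA.mul_mul_conjTranspose_same S
  rw [hB.isHermitian] at h2
  convert h2 using 1
  rw [Matrix.mul_sub, Matrix.sub_mul, Matrix.mul_smul, mul_one, Matrix.smul_mul, h1]
  congr 1
  calc A * A = (S * S) * (S * S) := by rw [h1]
    _ = S * (S * S * S) := by noncomm_ring
    _ = S * A * S := by rw [h1]; noncomm_ring

lemma norm_le_of_sandwich {A : Matrix (Fin d) (Fin d) ℝ} {c : ℝ} (hc : 0 ≤ c)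
    (hA : A.PosSemidef) (hcA : (c • (1 : Matrix (Fin d) (Fin d) ℝ) - A).PosSemidef) :
    ‖A‖ ≤ c := by
  rw [Matrix.cstar_norm_def]
  refine ContinuousLinearMap.opNorm_le_bound _ hc fun x => ?_
  have hsq : ‖(Matrix.toEuclideanCLM (𝕜 := ℝ) A) x‖ ^ 2 ≤ (c * ‖x‖) ^ 2 := by
    have hnx : ‖x‖ ^ 2 = (WithLp.equiv 2 _ x) ⬝ᵥ (WithLp.equiv 2 _ x) := by
      rw [← real_inner_self_eq_norm_sq, inner_eq_dot]
    rw [← real_inner_self_eq_norm_sq, inner_eq_dot]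
    set x' : Fin d → ℝ := WithLp.equiv 2 _ x with hx'
    have hAx : WithLp.equiv 2 _ ((Matrix.toEuclideanCLM (𝕜 := ℝ) A) x) = A *ᵥ x' := by
      exact Matrix.ofLp_toEuclideanCLM A x
    rw [hAx]
    have hq2 : (A *ᵥ x') ⬝ᵥ (A *ᵥ x') = x' ⬝ᵥ ((A * A) *ᵥ x') := by
      rw [← Matrix.mulVec_mulVec, Matrix.dotProduct_mulVec x' A]
      congr 1
      rw [← Matrix.mulVec_transpose]
      congr 1
      have := hA.isHermitian
      rw [Matrix.IsHermitian, Matrix.conjTranspose_eq_transpose_of_trivial] at this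
      rw [this]
    have hpsd1 := (psd_sub_sq hA hcA).dotProduct_mulVec_nonneg x'
    have hpsd2 := hcA.dotProduct_mulVec_nonneg x'
    have hpsd3 := hA.dotProduct_mulVec_nonneg x'
    simp only [Matrix.sub_mulVec, Matrix.smul_mulVec, dotProduct_sub, dotProduct_smul,
      smul_eq_mul, star_trivial, Matrix.one_mulVec] at hpsd1 hpsd2 hpsd3
    have hxx : (0:ℝ) ≤ x' ⬝ᵥ x' := Finset.sum_nonneg fun i _ => mul_self_nonneg _
    rw [hq2, mul_pow, hnx]
    nlinarith [hpsd1, hpsd2, hpsd3, hxx, mul_le_mul_of_nonneg_left hpsd2 hc]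
  have h1 : (0:ℝ) ≤ ‖(Matrix.toEuclideanCLM (𝕜 := ℝ) A) x‖ := norm_nonneg _
  have h2 : (0:ℝ) ≤ c * ‖x‖ := by positivity
  exact (pow_le_pow_iff_left₀ h1 h2 two_ne_zero).mp hsq


def TT (Hm : ℕ → Matrix (Fin d) (Fin d) ℝ) (α : ℝ) (l n : ℕ) : Matrix (Fin d) (Fin d) ℝ :=
  ∑ s ∈ (Finset.range n).powersetCard l, ((s.sort (· ≤ ·)).map (fun k => -(α • Hm k))).prod

lemma sort_insert_top {s : Finset ℕ} {n : ℕ} (hs : ∀ x ∈ s, x < n) :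
    (insert n s).sort (· ≤ ·) = s.sort (· ≤ ·) ++ [n] := by
  have hn : n ∉ s := fun hmem => lt_irrefl n (hs n hmem)
  have hsort2 : List.Pairwise (· ≤ ·) (s.sort (· ≤ ·) ++ [n]) := by
    rw [List.pairwise_append]
    refine ⟨Finset.pairwise_sort _ _, List.pairwise_singleton _ n, fun x hx y hy => ?_⟩
    rw [List.mem_singleton] at hy
    subst hy
    exact le_of_lt (hs x ((Finset.mem_sort _).mp hx))
  have hperm : List.Perm ((insert n s).sort (· ≤ ·)) (s.sort (· ≤ ·) ++ [n]) := by
    rw [← Multiset.coe_eq_coe]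
    have hc : ((s.sort (· ≤ ·) ++ [n] : List ℕ) : Multiset ℕ)
        = ((s.sort (· ≤ ·) : List ℕ) : Multiset ℕ) + (([n] : List ℕ) : Multiset ℕ) := by
      rw [Multiset.coe_add]
    rw [hc, Finset.sort_eq, Finset.sort_eq, Finset.insert_val_of_notMem hn,
      Multiset.coe_singleton, add_comm, Multiset.singleton_add]
  exact List.Perm.eq_of_pairwise' (Finset.pairwise_sort _ _) hsort2 hperm

lemma TT_zero (Hm : ℕ → Matrix (Fin d) (Fin d) ℝ) (α : ℝ) (n : ℕ) : TT Hm α 0 n = 1 := by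
  simp [TT]

lemma TT_gt (Hm : ℕ → Matrix (Fin d) (Fin d) ℝ) (α : ℝ) {l n : ℕ} (h : n < l) :
    TT Hm α l n = 0 := by
  rw [TT, Finset.powersetCard_eq_empty.mpr (by simpa using h), Finset.sum_empty]

lemma TT_succ (Hm : ℕ → Matrix (Fin d) (Fin d) ℝ) (α : ℝ) (l n : ℕ) :
    TT Hm α (l + 1) (n + 1) = TT Hm α (l + 1) n + TT Hm α l n * (-(α • Hm n)) := by
  classical
  have hn : n ∉ Finset.range n := by simp
  rw [TT, Finset.range_add_one, Finset.powersetCard_succ_insert hn]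
  rw [Finset.sum_union]
  · congr 1
    rw [Finset.sum_image, TT, Finset.sum_mul]
    · refine Finset.sum_congr rfl fun s hs => ?_
      rw [Finset.mem_powersetCard] at hs
      have hsub : ∀ x ∈ s, x < n := fun x hx => Finset.mem_range.mp (hs.1 hx)
      rw [sort_insert_top hsub, List.map_append, List.prod_append]
      simp
    · intro s hs t ht hst
      rw [Finset.mem_coe, Finset.mem_powersetCard] at hs ht
      have hns : n ∉ s := fun h => by simpa using hs.1 h
      have hnt : n ∉ t := fun h => by simpa using ht.1 h
      have := congrArg (Finset.erase · n) hst
      simpa [Finset.erase_insert hns, Finset.erase_insert hnt] using this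
  · rw [Finset.disjoint_right]
    intro s hs hs'
    rw [Finset.mem_image] at hs
    obtain ⟨t, ht, rfl⟩ := hs
    rw [Finset.mem_powersetCard] at hs'
    have := hs'.1 (Finset.mem_insert_self n t)
    simp at this

lemma norm_listProd_le (c : ℝ) (hc : 0 ≤ c) :
    ∀ (L : List (Matrix (Fin d) (Fin d) ℝ)), (∀ A ∈ L, ‖A‖ ≤ c) → ‖L.prod‖ ≤ c ^ L.length
  | [], _ => by simpa using norm_one_le'
  | (a :: l), h => by
    rw [List.prod_cons, List.length_cons, pow_succ']
    calc ‖a * l.prod‖ ≤ ‖a‖ * ‖l.prod‖ := norm_mul_le _ _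
      _ ≤ c * c ^ l.length := by
          apply mul_le_mul (h a List.mem_cons_self) (norm_listProd_le c hc l
            fun A hA => h A (List.mem_cons_of_mem a hA)) (norm_nonneg _) hc

lemma TT_norm_le (Hm : ℕ → Matrix (Fin d) (Fin d) ℝ) {α H : ℝ} (hα : 0 ≤ α) (hH : 0 ≤ H)
    (l n : ℕ) (hbdd : ∀ k < n, ‖Hm k‖ ≤ H) :
    ‖TT Hm α l n‖ ≤ (n.choose l : ℝ) * (α * H) ^ l := by
  rw [TT]
  calc ‖∑ s ∈ (Finset.range n).powersetCard l,
        ((s.sort (· ≤ ·)).map (fun k => -(α • Hm k))).prod‖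
      ≤ ∑ s ∈ (Finset.range n).powersetCard l,
        ‖((s.sort (· ≤ ·)).map (fun k => -(α • Hm k))).prod‖ := norm_sum_le _ _
    _ ≤ ∑ s ∈ (Finset.range n).powersetCard l, (α * H) ^ l := by
        refine Finset.sum_le_sum fun s hs => ?_
        rw [Finset.mem_powersetCard] at hs
        have hlen : ((s.sort (· ≤ ·)).map (fun k => -(α • Hm k))).length = l := by
          rw [List.length_map, Finset.length_sort, hs.2]
        rw [← hlen]
        apply norm_listProd_le _ (by positivity)
        intro A hA
        rw [List.mem_map] at hA
        obtain ⟨k, hk, rfl⟩ := hA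
        have hkn : k < n := Finset.mem_range.mp (hs.1 ((Finset.mem_sort _).mp hk))
        rw [norm_neg, norm_smul, Real.norm_eq_abs, abs_of_nonneg hα]
        exact mul_le_mul_of_nonneg_left (hbdd k hkn) hα
    _ = (n.choose l : ℝ) * (α * H) ^ l := by
        rw [Finset.sum_const, Finset.card_powersetCard, Finset.card_range, nsmul_eq_mul]

def SS (Hm : ℕ → Matrix (Fin d) (Fin d) ℝ) (α : ℝ) (L n : ℕ) : Matrix (Fin d) (Fin d) ℝ :=
  ∑ l ∈ Finset.range (L + 1), TT Hm α l n

lemma mulList_zero (Hm : ℕ → Matrix (Fin d) (Fin d) ℝ) (α : ℝ) : mulList Hm α 0 0 = 1 := by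
  simp [mulList]

lemma mulList_succ (Hm : ℕ → Matrix (Fin d) (Fin d) ℝ) (α : ℝ) (n : ℕ) :
    mulList Hm α 0 (n + 1) = mulList Hm α 0 n * (1 - α • Hm n) := by
  rw [mulList, List.range'_concat, List.map_append, List.prod_append]
  simp [mulList]

lemma SS_succ (Hm : ℕ → Matrix (Fin d) (Fin d) ℝ) (α : ℝ) (L n : ℕ) :
    SS Hm α L (n + 1) = SS Hm α L n * (1 - α • Hm n) + TT Hm α L n * (α • Hm n) := by
  have h1 : SS Hm α L n = (∑ l ∈ Finset.range L, TT Hm α (l + 1) n) + 1 := by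
    rw [SS, Finset.sum_range_succ' (fun l => TT Hm α l n), TT_zero]
  have h2 : SS Hm α L n = (∑ l ∈ Finset.range L, TT Hm α l n) + TT Hm α L n :=
    Finset.sum_range_succ _ _
  rw [SS, Finset.sum_range_succ' (fun l => TT Hm α l (n + 1))]
  simp_rw [TT_succ, TT_zero]
  rw [Finset.sum_add_distrib, ← Finset.sum_mul]
  have hB : (∑ l ∈ Finset.range L, TT Hm α l n) = SS Hm α L n - TT Hm α L n := by
    rw [h2]; abel
  rw [hB, h1]
  simp only [sub_mul, mul_neg, mul_sub, mul_one]
  abel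

lemma expansion (Hm : ℕ → Matrix (Fin d) (Fin d) ℝ) (α : ℝ) (n : ℕ) :
    mulList Hm α 0 n = SS Hm α n n := by
  induction n with
  | zero => rw [mulList_zero, SS]; simp [TT_zero]
  | succ n ih =>
      rw [mulList_succ, ih]
      rw [SS_succ, TT_gt Hm α (Nat.lt_succ_self n), zero_mul, add_zero]
      have : SS Hm α (n + 1) n = SS Hm α n n := by
        rw [SS, Finset.sum_range_succ, TT_gt Hm α (Nat.lt_succ_self n), add_zero, SS]
      rw [this]

lemma binomSum_eq (Hm : ℕ → Matrix (Fin d) (Fin d) ℝ) (α : ℝ) (n L : ℕ) :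
    binomSum Hm α n L = SS Hm α L n := by
  induction L with
  | zero => simp [binomSum, SS, TT_zero]
  | succ L ih =>
      rw [binomSum, Finset.sum_Icc_succ_top (by omega), SS, Finset.sum_range_succ,
        ← add_assoc, ← SS, ← ih, binomSum]
      rfl

def EE (Hm : ℕ → Matrix (Fin d) (Fin d) ℝ) (α : ℝ) (L n : ℕ) : Matrix (Fin d) (Fin d) ℝ :=
  mulList Hm α 0 n - SS Hm α L n

lemma EE_succ (Hm : ℕ → Matrix (Fin d) (Fin d) ℝ) (α : ℝ) (L n : ℕ) :
    EE Hm α L (n + 1) = EE Hm α L n * (1 - α • Hm n) + TT Hm α L n * (-(α • Hm n)) := by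
  rw [EE, EE, mulList_succ, SS_succ]
  simp only [sub_mul, mul_neg, mul_sub, mul_one]
  abel

lemma sum_shift (f : ℕ → ℝ) (m : ℕ) :
    ∑ l ∈ Finset.Icc 1 (m + 1), f l = f 1 + ∑ l ∈ Finset.Icc 1 m, f (l + 1) := by
  induction m with
  | zero => simp
  | succ m ih =>
      rw [Finset.sum_Icc_succ_top (by omega), ih, Finset.sum_Icc_succ_top (by omega) (fun l => f (l+1)), ← add_assoc]

/-- BinomMAML error bound under local strong convexity at the final `M` trajectory points:
`‖∏_{k=0}^{K-1}(I-αH_k) g - Ĝ‖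
  ≤ [(αH)^{L+1} Σ_{l=1}^{M} C(K-l,L)(1-αh)^{l-1}
     + (1-αh)^M Σ_{l=L+1}^{K-M} C(K-M,l)(αH)^l] ‖g‖`. -/
theorem binommaml_error_bound_strong_convex (K L M : ℕ) (Hm : ℕ → Matrix (Fin d) (Fin d) ℝ)
    (α H h : ℝ) (hsymm : ∀ k, (Hm k).IsSymm)
    (hstrong : ∀ k, K - M ≤ k → k < K →
      (Hm k - h • (1 : Matrix (Fin d) (Fin d) ℝ)).PosSemidef ∧
      (H • (1 : Matrix (Fin d) (Fin d) ℝ) - Hm k).PosSemidef)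
    (hbdd : ∀ k, k < K - M → matOpNorm (Hm k) ≤ H)
    (hα : 0 < α) (hαH : α ≤ 1 / H) (hh : 0 < h) (hhH : h ≤ H)
    (hML : M ≤ L) (hLMK : L + M ≤ K) (g : EuclideanSpace ℝ (Fin d)) :
    ‖applyM (mulList Hm α 0 K) g - applyM (binomSum Hm α K L) g‖
      ≤ ((α * H) ^ (L + 1) * ∑ l ∈ Finset.Icc 1 M, ((K - l).choose L : ℝ) * (1 - α * h) ^ (l - 1)
          + (1 - α * h) ^ M
              * ∑ l ∈ Finset.Icc (L + 1) (K - M), ((K - M).choose l : ℝ) * (α * H) ^ l)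
        * ‖g‖ := by
  have hH0 : 0 < H := lt_of_lt_of_le hh hhH
  have hαH1 : α * H ≤ 1 := by
    calc α * H ≤ (1 / H) * H := mul_le_mul_of_nonneg_right hαH hH0.le
      _ = 1 := by field_simp
  have hαh1 : 0 ≤ 1 - α * h := by nlinarith
  have hMK : M ≤ K := by omega
  -- norm facts for trailing indices
  have hfacN : ∀ k, K - M ≤ k → k < K →
      ‖(1 : Matrix (Fin d) (Fin d) ℝ) - α • Hm k‖ ≤ 1 - α * h ∧ ‖Hm k‖ ≤ H := by
    intro k hk1 hk2
    obtain ⟨P1, P2⟩ := hstrong k hk1 hk2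
    have hHmPSD : (Hm k).PosSemidef := by
      have := (P1.add (psd_smul hh.le Matrix.PosSemidef.one))
      have he : Hm k - h • (1 : Matrix (Fin d) (Fin d) ℝ) + h • (1 : Matrix (Fin d) (Fin d) ℝ)
          = Hm k := by abel
      rwa [he] at this
    constructor
    · apply norm_le_of_sandwich hαh1
      · have := (psd_smul (by nlinarith : (0:ℝ) ≤ 1 - α * H) Matrix.PosSemidef.one).add
          (psd_smul hα.le P2)
        have he : (1 - α * H) • (1 : Matrix (Fin d) (Fin d) ℝ)
            + α • (H • (1 : Matrix (Fin d) (Fin d) ℝ) - Hm k)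
            = 1 - α • Hm k := by
          rw [smul_sub, sub_smul, one_smul, smul_smul]
          abel
        rwa [he] at this
      · have := psd_smul hα.le P1
        have he : α • (Hm k - h • (1 : Matrix (Fin d) (Fin d) ℝ))
            = (1 - α * h) • (1 : Matrix (Fin d) (Fin d) ℝ)
              - ((1 : Matrix (Fin d) (Fin d) ℝ) - α • Hm k) := by
          rw [smul_sub, sub_smul, one_smul, smul_smul]
          abel
        rwa [he] at this
    · exact norm_le_of_sandwich hH0.le hHmPSD P2
  have hbddAll : ∀ k, k < K → ‖Hm k‖ ≤ H := by
    intro k hk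
    by_cases hkM : k < K - M
    · exact hbdd k hkM
    · exact (hfacN k (by omega) hk).2
  -- the tail bound constant
  set B0 : ℝ := ∑ l ∈ Finset.Icc (L + 1) (K - M), ((K - M).choose l : ℝ) * (α * H) ^ l with hB0
  have hB0nn : 0 ≤ B0 := by
    apply Finset.sum_nonneg
    intro l _
    positivity
  -- base case bound
  have hbase : ‖EE Hm α L (K - M)‖ ≤ B0 := by
    have hLN : L + 1 ≤ K - M + 1 := by omega
    have hE : EE Hm α L (K - M) = ∑ l ∈ Finset.Ico (L + 1) (K - M + 1), TT Hm α l (K - M) := by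
      rw [EE, expansion, Finset.sum_Ico_eq_sub (fun l => TT Hm α l (K - M)) hLN, SS, SS]
    rw [hE, hB0]
    calc ‖∑ l ∈ Finset.Ico (L + 1) (K - M + 1), TT Hm α l (K - M)‖
        ≤ ∑ l ∈ Finset.Ico (L + 1) (K - M + 1), ‖TT Hm α l (K - M)‖ := norm_sum_le _ _
      _ ≤ ∑ l ∈ Finset.Ico (L + 1) (K - M + 1), ((K - M).choose l : ℝ) * (α * H) ^ l := by
          refine Finset.sum_le_sum fun l _ => ?_
          exact TT_norm_le Hm hα.le hH0.le l (K - M) fun k hk => hbddAll k (by omega)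
      _ = ∑ l ∈ Finset.Icc (L + 1) (K - M), ((K - M).choose l : ℝ) * (α * H) ^ l := by
          rw [Finset.Ico_add_one_right_eq_Icc]
  -- main induction
  have ind : ∀ m, m ≤ M → ‖EE Hm α L (K - M + m)‖
      ≤ (1 - α * h) ^ m * B0 + (α * H) ^ (L + 1)
          * ∑ l ∈ Finset.Icc 1 m, ((K - M + m - l).choose L : ℝ) * (1 - α * h) ^ (l - 1) := by
    intro m
    induction m with
    | zero => intro _; simpa using hbase
    | succ m ih =>
        intro hm
        have hmM : m ≤ M := by omega
        have ihm := ih hmM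
        set n := K - M + m with hn
        have hn2 : n < K := by omega
        have hn1 : K - M ≤ n := by omega
        have hstep : ‖EE Hm α L (n + 1)‖
            ≤ ‖EE Hm α L n‖ * (1 - α * h) + ((n.choose L : ℝ) * (α * H) ^ L) * (α * H) := by
          rw [EE_succ]
          calc ‖EE Hm α L n * (1 - α • Hm n) + TT Hm α L n * (-(α • Hm n))‖
              ≤ ‖EE Hm α L n * (1 - α • Hm n)‖ + ‖TT Hm α L n * (-(α • Hm n))‖ :=
                norm_add_le _ _
            _ ≤ ‖EE Hm α L n‖ * ‖(1 : Matrix (Fin d) (Fin d) ℝ) - α • Hm n‖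
                + ‖TT Hm α L n‖ * ‖-(α • Hm n)‖ :=
                add_le_add (norm_mul_le _ _) (norm_mul_le _ _)
            _ ≤ ‖EE Hm α L n‖ * (1 - α * h) + ((n.choose L : ℝ) * (α * H) ^ L) * (α * H) := by
                apply add_le_add
                · exact mul_le_mul_of_nonneg_left (hfacN n hn1 hn2).1 (norm_nonneg _)
                · apply mul_le_mul
                  · exact TT_norm_le Hm hα.le hH0.le L n fun k hk => hbddAll k (by omega)
                  · rw [norm_neg, norm_smul, Real.norm_eq_abs, abs_of_nonneg hα.le]
                    exact mul_le_mul_of_nonneg_left (hbddAll n hn2) hα.le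
                  · exact norm_nonneg _
                  · positivity
        have hrw : K - M + (m + 1) = n + 1 := by omega
        rw [hrw]
        calc ‖EE Hm α L (n + 1)‖
            ≤ ‖EE Hm α L n‖ * (1 - α * h) + ((n.choose L : ℝ) * (α * H) ^ L) * (α * H) := hstep
          _ ≤ ((1 - α * h) ^ m * B0 + (α * H) ^ (L + 1)
                * ∑ l ∈ Finset.Icc 1 m, ((n - l).choose L : ℝ) * (1 - α * h) ^ (l - 1))
                  * (1 - α * h)
              + ((n.choose L : ℝ) * (α * H) ^ L) * (α * H) := by
                apply add_le_add_left
                exact mul_le_mul_of_nonneg_right ihm hαh1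
          _ = (1 - α * h) ^ (m + 1) * B0 + (α * H) ^ (L + 1)
                * ∑ l ∈ Finset.Icc 1 (m + 1), ((n + 1 - l).choose L : ℝ)
                    * (1 - α * h) ^ (l - 1) := by
              rw [sum_shift (fun l => ((n + 1 - l).choose L : ℝ) * (1 - α * h) ^ (l - 1)) m]
              have hs : ∀ l ∈ Finset.Icc 1 m,
                  ((n + 1 - (l + 1)).choose L : ℝ) * (1 - α * h) ^ (l + 1 - 1)
                    = (((n - l).choose L : ℝ) * (1 - α * h) ^ (l - 1)) * (1 - α * h) := by
                intro l hl
                have hl1 : 1 ≤ l := (Finset.mem_Icc.mp hl).1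
                have h1 : n + 1 - (l + 1) = n - l := by omega
                have h2 : l + 1 - 1 = (l - 1) + 1 := by omega
                rw [h1, h2, pow_succ]
                ring
              rw [Finset.sum_congr rfl hs, ← Finset.sum_mul]
              simp only [Nat.add_sub_cancel, Nat.sub_self, pow_zero, mul_one]
              ring
  -- conclusion
  have hKrw : K - M + M = K := by omega
  have hEK := ind M le_rfl
  rw [hKrw] at hEK
  have happ : applyM (mulList Hm α 0 K) g - applyM (binomSum Hm α K L) g
      = applyM (EE Hm α L K) g := by
    rw [applyM, applyM, applyM, EE, binomSum_eq, map_sub]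
    rfl
  rw [happ]
  calc ‖applyM (EE Hm α L K) g‖ ≤ ‖EE Hm α L K‖ * ‖g‖ := applyM_le _ _
    _ ≤ _ := mul_le_mul_of_nonneg_right (hEK.trans (le_of_eq (by ring))) (norm_nonneg g)
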